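/- (Simulation lemma) If two MDPs share state space, action space, reward r with ‖r‖_∞ ≤ 1, and discount γ ∈ [0,1), and their transition kernels satisfy ‖P̂(·|s,a) - P(·|s,a)‖₁ ≤ ε for all (s,a), then for any stationary policy π, the values satisfy |⟨d_{P,π}, r⟩ - ⟨d_{P̂,π}, r⟩| ≤ ε/(1-γ), where d_{P,π} denotes the discounted state-action distribution of π under transition kernel P. -/

import Mathlib

open Matrix

/-- The simulation lemma (Lemma 8.5.4 of Kakade 2003): if two MDPs share
states, actions, a reward bounded by `1` and discount `γ`, and their kernels
are `ε`-close in `L¹` at every state-action pair, then the discounted values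
of any stationary policy differ by at most `ε/(1-γ)`. -/
theorem simulation_lemma (S A : Type*) [Fintype S] [DecidableEq S] [Fintype A]
    (γ ε : ℝ) (hγ0 : 0 ≤ γ) (hγ1 : γ < 1) (hε : 0 ≤ ε)
    (P Phat : S → A → S → ℝ)
    (hP0 : ∀ s a s', 0 ≤ P s a s') (hP1 : ∀ s a, ∑ s', P s a s' = 1)
    (hPhat0 : ∀ s a s', 0 ≤ Phat s a s') (hPhat1 : ∀ s a, ∑ s', Phat s a s' = 1)
    (pol : S → A → ℝ) (hpol0 : ∀ s a, 0 ≤ pol s a) (hpol1 : ∀ s, ∑ a, pol s a = 1)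
    (r : S → A → ℝ) (hr : ∀ s a, |r s a| ≤ 1)
    (d0 : S → ℝ) (hd00 : ∀ s, 0 ≤ d0 s) (hd01 : ∑ s, d0 s = 1)
    (hclose : ∀ s a, ∑ s', |Phat s a s' - P s a s'| ≤ ε) :
    ∀ M Mhat : Matrix S S ℝ,
      (∀ s' s, M s' s = ∑ a, pol s a * P s a s') →
      (∀ s' s, Mhat s' s = ∑ a, pol s a * Phat s a s') →
      |((1 - γ) * ∑' t : ℕ, γ ^ t *
            ∑ s, ((M ^ t) *ᵥ d0) s * (∑ a, pol s a * r s a))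
        - ((1 - γ) * ∑' t : ℕ, γ ^ t *
            ∑ s, ((Mhat ^ t) *ᵥ d0) s * (∑ a, pol s a * r s a))|
        ≤ ε / (1 - γ) := by
  intro M Mhat hM hMhat
  have h1γ : 0 < 1 - γ := by linarith
  set v : S → ℝ := fun s => ∑ a, pol s a * r s a with hv
  have hvle : ∀ s, |v s| ≤ 1 := by
    intro s
    calc |v s| ≤ ∑ a, |pol s a * r s a| := Finset.abs_sum_le_sum_abs _ _
      _ ≤ ∑ a, pol s a := by
          apply Finset.sum_le_sum; intro a _
          rw [abs_mul, abs_of_nonneg (hpol0 s a)]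
          exact mul_le_of_le_one_right (hpol0 s a) (hr s a)
      _ = 1 := hpol1 s
  -- stochasticity of M, Mhat
  have hM0 : ∀ s' s, 0 ≤ M s' s := fun s' s => by
    rw [hM]; exact Finset.sum_nonneg fun a _ => mul_nonneg (hpol0 s a) (hP0 s a s')
  have hMhat0 : ∀ s' s, 0 ≤ Mhat s' s := fun s' s => by
    rw [hMhat]; exact Finset.sum_nonneg fun a _ => mul_nonneg (hpol0 s a) (hPhat0 s a s')
  have hMcol : ∀ s, ∑ s', M s' s = 1 := by
    intro s
    simp only [hM]
    rw [Finset.sum_comm]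
    simp_rw [← Finset.mul_sum, hP1, mul_one]
    exact hpol1 s
  have hMhatcol : ∀ s, ∑ s', Mhat s' s = 1 := by
    intro s
    simp only [hMhat]
    rw [Finset.sum_comm]
    simp_rw [← Finset.mul_sum, hPhat1, mul_one]
    exact hpol1 s
  have hMclose : ∀ s, ∑ s', |Mhat s' s - M s' s| ≤ ε := by
    intro s
    calc ∑ s', |Mhat s' s - M s' s|
        = ∑ s', |∑ a, pol s a * (Phat s a s' - P s a s')| := by
          simp [hM, hMhat, ← Finset.sum_sub_distrib, mul_sub]
      _ ≤ ∑ s', ∑ a, pol s a * |Phat s a s' - P s a s'| := by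
          apply Finset.sum_le_sum; intro s' _
          calc |∑ a, pol s a * (Phat s a s' - P s a s')|
              ≤ ∑ a, |pol s a * (Phat s a s' - P s a s')| := Finset.abs_sum_le_sum_abs _ _
            _ = ∑ a, pol s a * |Phat s a s' - P s a s'| := by
                simp_rw [abs_mul, abs_of_nonneg (hpol0 s _)]
      _ = ∑ a, pol s a * ∑ s', |Phat s a s' - P s a s'| := by
          rw [Finset.sum_comm]; simp_rw [Finset.mul_sum]
      _ ≤ ∑ a, pol s a * ε := by
          apply Finset.sum_le_sum; intro a _
          exact mul_le_mul_of_nonneg_left (hclose s a) (hpol0 s a)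
      _ = ε := by rw [← Finset.sum_mul, hpol1, one_mul]
  -- distributions
  set d : ℕ → S → ℝ := fun t => (M ^ t) *ᵥ d0 with hd
  set dh : ℕ → S → ℝ := fun t => (Mhat ^ t) *ᵥ d0 with hdh
  have hdsucc : ∀ t, d (t + 1) = M *ᵥ d t := by
    intro t; simp [hd, Matrix.mulVec_mulVec, ← pow_succ']
  have hdhsucc : ∀ t, dh (t + 1) = Mhat *ᵥ dh t := by
    intro t; simp [hdh, Matrix.mulVec_mulVec, ← pow_succ']
  have hdprop : ∀ t, (∀ s, 0 ≤ d t s) ∧ (∑ s, d t s = 1) := by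
    intro t
    induction t with
    | zero => simpa [hd] using ⟨hd00, hd01⟩
    | succ n ih =>
      constructor
      · intro s
        rw [hdsucc]
        exact Finset.sum_nonneg fun s' _ => mul_nonneg (hM0 s s') (ih.1 s')
      · rw [hdsucc]
        simp only [Matrix.mulVec, dotProduct]
        rw [Finset.sum_comm]
        simp_rw [← Finset.sum_mul, hMcol, one_mul]
        exact ih.2
  have hdhprop : ∀ t, (∀ s, 0 ≤ dh t s) ∧ (∑ s, dh t s = 1) := by
    intro t
    induction t with
    | zero => simpa [hdh] using ⟨hd00, hd01⟩
    | succ n ih =>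
      constructor
      · intro s
        rw [hdhsucc]
        exact Finset.sum_nonneg fun s' _ => mul_nonneg (hMhat0 s s') (ih.1 s')
      · rw [hdhsucc]
        simp only [Matrix.mulVec, dotProduct]
        rw [Finset.sum_comm]
        simp_rw [← Finset.sum_mul, hMhatcol, one_mul]
        exact ih.2
  -- L1 key bound
  have hkey : ∀ t, ∑ s, |dh t s - d t s| ≤ t * ε := by
    intro t
    induction t with
    | zero => simp [hd, hdh]
    | succ n ih =>
      have step : ∀ s, dh (n+1) s - d (n+1) s
          = (∑ s', M s s' * (dh n s' - d n s')) + ∑ s', (Mhat s s' - M s s') * dh n s' := by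
        intro s
        rw [hdsucc, hdhsucc]
        simp only [Matrix.mulVec, dotProduct]
        ring_nf
        rw [← Finset.sum_add_distrib, ← Finset.sum_sub_distrib]
        apply Finset.sum_congr rfl
        intro s' _
        ring
      calc ∑ s, |dh (n+1) s - d (n+1) s|
          ≤ ∑ s, ((∑ s', M s s' * |dh n s' - d n s'|)
              + ∑ s', |Mhat s s' - M s s'| * dh n s') := by
            apply Finset.sum_le_sum; intro s _
            rw [step s]
            refine (abs_add_le _ _).trans (add_le_add ?_ ?_)
            · refine (Finset.abs_sum_le_sum_abs _ _).trans ?_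
              apply Finset.sum_le_sum; intro s' _
              rw [abs_mul, abs_of_nonneg (hM0 s s')]
            · refine (Finset.abs_sum_le_sum_abs _ _).trans ?_
              apply Finset.sum_le_sum; intro s' _
              rw [abs_mul, abs_of_nonneg ((hdhprop n).1 s')]
        _ = (∑ s', |dh n s' - d n s'|) + ∑ s', (∑ s, |Mhat s s' - M s s'|) * dh n s' := by
            rw [Finset.sum_add_distrib]
            congr 1
            · rw [Finset.sum_comm]
              simp_rw [← Finset.sum_mul, hMcol, one_mul]
            · rw [Finset.sum_comm]
              simp_rw [Finset.sum_mul]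
        _ ≤ n * ε + ∑ s', ε * dh n s' := by
            refine add_le_add ih (Finset.sum_le_sum fun s' _ => ?_)
            exact mul_le_mul_of_nonneg_right (hMclose s') ((hdhprop n).1 s')
        _ = n * ε + ε := by rw [← Finset.mul_sum, (hdhprop n).2, mul_one]
        _ = (n + 1 : ℕ) * ε := by push_cast; ring
  -- value differences
  set a : ℕ → ℝ := fun t => ∑ s, d t s * v s with ha
  set b : ℕ → ℝ := fun t => ∑ s, dh t s * v s with hb
  have habound : ∀ t, |a t| ≤ 1 := by
    intro t
    calc |a t| ≤ ∑ s, |d t s * v s| := Finset.abs_sum_le_sum_abs _ _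
      _ ≤ ∑ s, d t s := by
          apply Finset.sum_le_sum; intro s _
          rw [abs_mul, abs_of_nonneg ((hdprop t).1 s)]
          exact mul_le_of_le_one_right ((hdprop t).1 s) (hvle s)
      _ = 1 := (hdprop t).2
  have hbbound : ∀ t, |b t| ≤ 1 := by
    intro t
    calc |b t| ≤ ∑ s, |dh t s * v s| := Finset.abs_sum_le_sum_abs _ _
      _ ≤ ∑ s, dh t s := by
          apply Finset.sum_le_sum; intro s _
          rw [abs_mul, abs_of_nonneg ((hdhprop t).1 s)]
          exact mul_le_of_le_one_right ((hdhprop t).1 s) (hvle s)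
      _ = 1 := (hdhprop t).2
  have habdiff : ∀ t : ℕ, |a t - b t| ≤ t * ε := by
    intro t
    calc |a t - b t| = |∑ s, (d t s - dh t s) * v s| := by
          rw [← Finset.sum_sub_distrib]; simp_rw [sub_mul]
      _ ≤ ∑ s, |(d t s - dh t s) * v s| := Finset.abs_sum_le_sum_abs _ _
      _ ≤ ∑ s, |dh t s - d t s| := by
          apply Finset.sum_le_sum; intro s _
          rw [abs_mul, abs_sub_comm]
          exact mul_le_of_le_one_right (abs_nonneg _) (hvle s)
      _ ≤ t * ε := hkey t
  have hγn : ‖γ‖ < 1 := by rw [Real.norm_eq_abs, abs_of_nonneg hγ0]; exact hγ1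
  have hsumgeom : Summable (fun t : ℕ => γ ^ t) := summable_geometric_of_lt_one hγ0 hγ1
  have hsa : Summable (fun t : ℕ => γ ^ t * a t) := by
    apply Summable.of_norm_bounded hsumgeom
    intro t
    rw [norm_mul, Real.norm_eq_abs, Real.norm_eq_abs, abs_pow, abs_of_nonneg hγ0]
    exact mul_le_of_le_one_right (pow_nonneg hγ0 t) (habound t)
  have hsb : Summable (fun t : ℕ => γ ^ t * b t) := by
    apply Summable.of_norm_bounded hsumgeom
    intro t
    rw [norm_mul, Real.norm_eq_abs, Real.norm_eq_abs, abs_pow, abs_of_nonneg hγ0]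
    exact mul_le_of_le_one_right (pow_nonneg hγ0 t) (hbbound t)
  have hstε : Summable (fun t : ℕ => (t : ℝ) * γ ^ t * ε) :=
    ((summable_pow_mul_geometric_of_norm_lt_one 1 hγn).mul_right ε).congr
      (by intro t; ring)
  have hmain : |∑' t : ℕ, γ ^ t * a t - ∑' t : ℕ, γ ^ t * b t| ≤ ε * γ / (1 - γ) ^ 2 := by
    rw [← Summable.tsum_sub hsa hsb]
    have h1 : |∑' t : ℕ, (γ ^ t * a t - γ ^ t * b t)| ≤ ∑' t : ℕ, (t : ℝ) * γ ^ t * ε := by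
      have h2 : ∀ t : ℕ, ‖γ ^ t * a t - γ ^ t * b t‖ ≤ (t : ℝ) * γ ^ t * ε := by
        intro t
        rw [← mul_sub, Real.norm_eq_abs, abs_mul, abs_pow, abs_of_nonneg hγ0]
        calc γ ^ t * |a t - b t| ≤ γ ^ t * (t * ε) :=
              mul_le_mul_of_nonneg_left (habdiff t) (pow_nonneg hγ0 t)
          _ = (t : ℝ) * γ ^ t * ε := by ring
      calc |∑' t : ℕ, (γ ^ t * a t - γ ^ t * b t)|
          ≤ ∑' t : ℕ, ‖γ ^ t * a t - γ ^ t * b t‖ :=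
            norm_tsum_le_tsum_norm (Summable.of_nonneg_of_le (fun t => norm_nonneg _) h2 hstε)
        _ ≤ ∑' t : ℕ, (t : ℝ) * γ ^ t * ε := by
            exact Summable.tsum_le_tsum h2 (Summable.of_nonneg_of_le (fun t => norm_nonneg _) h2 hstε) hstε
    refine h1.trans ?_
    have : ∑' t : ℕ, (t : ℝ) * γ ^ t * ε = (γ / (1 - γ) ^ 2) * ε := by
      rw [tsum_mul_right, tsum_coe_mul_geometric_of_norm_lt_one hγn]
    rw [this]; ring_nf; rfl
  calc |(1 - γ) * ∑' t : ℕ, γ ^ t * a t - (1 - γ) * ∑' t : ℕ, γ ^ t * b t|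
      = (1 - γ) * |∑' t : ℕ, γ ^ t * a t - ∑' t : ℕ, γ ^ t * b t| := by
        rw [← mul_sub, abs_mul, abs_of_nonneg h1γ.le]
    _ ≤ (1 - γ) * (ε * γ / (1 - γ) ^ 2) := mul_le_mul_of_nonneg_left hmain h1γ.le
    _ = ε * γ / (1 - γ) := by field_simp
    _ ≤ ε / (1 - γ) := by
        gcongr
        nlinarith
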